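/- arXiv:2501.17645 — 3 statements merged into one kernel-verified Lean document; each statement's English description precedes it below -/
import Mathlib

section
/- If X and U are finite and all values G(x), g(x,y,u) are in ℝ∪{∞} with g nonnegative, then the iteration W_0 = G, W_{n+1} = P(W_n) stabilizes: there exists N ≤ |X| such that W_{N+1} = W_N, and W_N is the maximal fixed point of P. -/
noncomputable def Pop {X U : Type*} (F : X → U → Set X) (G : X → EReal)
    (g : X → X → U → EReal) (W : X → EReal) (x : X) : EReal :=
  min (G x) (⨅ u : U, ⨆ y ∈ F x u, g x y u + W y)

lemma EReal.lt_add_one' (a : EReal) (hb : a ≠ ⊥) (ht : a ≠ ⊤) : a < a + 1 := by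
  lift a to ℝ using ⟨ht, hb⟩
  norm_cast
  linarith

section BF

variable {X U : Type*} [Fintype X] [Fintype U] [Nonempty X] [Nonempty U]
  (F : X → U → Set X) (G : X → EReal) (g : X → X → U → EReal)

/-- iterates of the Bellman operator -/
noncomputable def Witer (k : ℕ) : X → EReal := (Pop F G g)^[k] G

lemma Witer_zero : Witer F G g 0 = G := rfl

lemma Witer_succ (k : ℕ) : Witer F G g (k + 1) = Pop F G g (Witer F G g k) := by
  simp only [Witer, Function.iterate_succ_apply']

lemma pop_mono {A B : X → EReal} (h : A ≤ B) : Pop F G g A ≤ Pop F G g B := by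
  intro x
  exact min_le_min le_rfl (iInf_mono fun u => iSup₂_mono fun y _ => add_le_add_right (h y) _)

lemma pop_le_G (A : X → EReal) : Pop F G g A ≤ G := fun x => min_le_left _ _

lemma Witer_anti (n : ℕ) : Witer F G g (n + 1) ≤ Witer F G g n := by
  induction n with
  | zero => exact pop_le_G F G g G
  | succ k ih =>
    have h := pop_mono F G g ih
    rw [← Witer_succ F G g k] at h
    rw [← Witer_succ F G g (k+1)] at h
    exact h

lemma Witer_le_G (n : ℕ) : Witer F G g n ≤ G := by
  induction n with
  | zero => exact le_rfl
  | succ k ih => exact le_trans (Witer_anti F G g k) ih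

/-- the pointwise limit -/
noncomputable def Wstar (x : X) : EReal := ⨅ n : ℕ, Witer F G g n x

lemma wstar_le (n : ℕ) : Wstar F G g ≤ Witer F G g n := fun x => iInf_le _ n

lemma pop_wstar_le : Pop F G g (Wstar F G g) ≤ Wstar F G g := by
  intro x
  refine le_iInf fun n => ?_
  cases n with
  | zero => exact min_le_left _ _
  | succ k =>
    rw [Witer_succ]
    exact pop_mono F G g (wstar_le F G g k) x

lemma lower_bound (hF : ∀ x u, (F x u).Nonempty) (hg : ∀ x y u, 0 ≤ g x y u) :
    ∀ (n : ℕ) (x : X), Finset.univ.inf' Finset.univ_nonempty G ≤ Witer F G g n x := by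
  intro n
  induction n with
  | zero => exact fun x => Finset.inf'_le _ (Finset.mem_univ x)
  | succ k ih =>
    intro x
    rw [Witer_succ]
    refine le_min (Finset.inf'_le _ (Finset.mem_univ x)) (le_iInf fun u => ?_)
    obtain ⟨y₀, hy₀⟩ := hF x u
    calc Finset.univ.inf' Finset.univ_nonempty G ≤ Witer F G g k y₀ := ih y₀
      _ ≤ g x y₀ u + Witer F G g k y₀ := le_add_of_nonneg_left (hg x y₀ u)
      _ ≤ ⨆ y ∈ F x u, g x y u + Witer F G g k y :=
          le_iSup₂ (f := fun y (_ : y ∈ F x u) => g x y u + Witer F G g k y) y₀ hy₀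

lemma wstar_ne_bot (hF : ∀ x u, (F x u).Nonempty) (hG : ∀ x, G x ≠ ⊥)
    (hg : ∀ x y u, 0 ≤ g x y u) (x : X) : Wstar F G g x ≠ ⊥ := by
  have h1 : Finset.univ.inf' Finset.univ_nonempty G ≤ Wstar F G g x :=
    le_iInf fun n => lower_bound F G g hF hg n x
  obtain ⟨z, _, hz⟩ := Finset.exists_mem_eq_inf' (Finset.univ_nonempty (α := X)) G
  intro hbot
  rw [hbot, le_bot_iff, hz] at h1
  exact hG z h1

lemma grow (hF : ∀ x u, (F x u).Nonempty) (hG : ∀ x, G x ≠ ⊥) (hg : ∀ x y u, 0 ≤ g x y u)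
    (n : ℕ) (hne : ∃ x, Witer F G g n x ≠ Wstar F G g x) :
    ∃ x, Witer F G g n x ≠ Wstar F G g x ∧ Witer F G g (n + 1) x = Wstar F G g x := by
  classical
  set Ws := Wstar F G g with hWsdef
  set Un : Finset X := Finset.univ.filter (fun x => Witer F G g n x ≠ Ws x) with hUndef
  have hmem : ∀ x, x ∈ Un ↔ Witer F G g n x ≠ Ws x := by
    intro x; rw [hUndef, Finset.mem_filter]; simp
  have hUn : Un.Nonempty := by
    obtain ⟨x, hx⟩ := hne
    exact ⟨x, (hmem x).2 hx⟩
  set m : EReal := Un.inf' hUn Ws with hmdef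
  obtain ⟨x₀, hx₀U, hx₀⟩ := Finset.exists_mem_eq_inf' hUn Ws
  rw [← hmdef] at hx₀
  have hWsle : ∀ k, Ws ≤ Witer F G g k := fun k => wstar_le F G g k
  have hm_le : ∀ x ∈ Un, m ≤ Ws x := fun x hx => Finset.inf'_le _ hx
  have hm_bot : m ≠ ⊥ := by
    rw [hx₀]; exact wstar_ne_bot F G g hF hG hg x₀
  have hm_top : m ≠ ⊤ := by
    intro htop
    have h1 : (⊤ : EReal) ≤ Witer F G g n x₀ := by
      rw [← htop, hx₀]; exact hWsle n x₀
    have h2 : Witer F G g n x₀ = Ws x₀ := by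
      rw [← hx₀, htop]; exact le_antisymm le_top h1
    exact (hmem x₀).1 hx₀U h2
  have hGgt : ∀ x ∈ Un, Ws x = m → m < G x := by
    intro x hxU hxm
    have hle : m ≤ G x := by rw [← hxm]; exact (hWsle 0 x)
    rcases lt_or_eq_of_le hle with h | h
    · exact h
    · exfalso
      refine (hmem x).1 hxU (le_antisymm ?_ (hWsle n x))
      rw [hxm, h]
      exact Witer_le_G F G g n x
  set v : X → U → EReal := fun x u => ⨆ y ∈ F x u, (g x y u + Ws y) with hvdef
  have hvex : ∀ x ∈ Un, Ws x = m → ∃ u, v x u ≤ m := by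
    intro x hxU hxm
    have h1 : min (G x) (⨅ u : U, v x u) ≤ m := by
      rw [← hxm]; exact pop_wstar_le F G g x
    have h2 : ⨅ u : U, v x u ≤ m := by
      rcases min_le_iff.1 h1 with h | h
      · exact absurd h (not_le.2 (hGgt x hxU hxm))
      · exact h
    obtain ⟨u, hu⟩ := Finite.exists_min (v x)
    exact ⟨u, (le_iInf hu).trans h2⟩
  by_cases hA : ∃ x ∈ Un, Ws x = m ∧ ∃ u, v x u ≤ m ∧ ∀ y ∈ F x u, Witer F G g n y = Ws y
  · obtain ⟨x, hxU, hxm, u, hvu, hset⟩ := hA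
    refine ⟨x, (hmem x).1 hxU, le_antisymm ?_ (hWsle (n+1) x)⟩
    rw [Witer_succ, hxm]
    calc Pop F G g (Witer F G g n) x
        ≤ ⨅ u' : U, ⨆ y ∈ F x u', (g x y u' + Witer F G g n y) := min_le_right _ _
      _ ≤ ⨆ y ∈ F x u, (g x y u + Witer F G g n y) := iInf_le _ u
      _ ≤ m := by
          refine iSup₂_le fun y hy => ?_
          rw [hset y hy]
          exact le_trans (le_iSup₂ (f := fun y (_ : y ∈ F x u) => g x y u + Ws y) y hy) hvu
  · exfalso
    push_neg at hA
    set E : X → EReal := fun x =>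
      if x ∈ Un ∧ Ws x = m then
        min (G x) (Finset.univ.inf (fun u : U => if m < v x u then v x u else ⊤))
      else ⊤ with hEdef
    set θ : EReal := Finset.univ.inf E with hθdef
    have hmtop : m < ⊤ := lt_top_iff_ne_top.2 hm_top
    have hθgt : m < θ := by
      refine (Finset.lt_inf_iff hmtop).2 fun x _ => ?_
      have : E x = if x ∈ Un ∧ Ws x = m then
          min (G x) (Finset.univ.inf (fun u : U => if m < v x u then v x u else ⊤))
        else ⊤ := rfl
      rw [this]
      split_ifs with hx
      · refine lt_min (hGgt x hx.1 hx.2) ((Finset.lt_inf_iff hmtop).2 fun u _ => ?_)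
        split_ifs with hu
        · exact hu
        · exact hmtop
      · exact hmtop
    have hm1 : m < m + 1 := EReal.lt_add_one' m hm_bot hm_top
    set m' : EReal := min θ (m + 1) with hm'def
    have hm'gt : m < m' := lt_min hθgt hm1
    have hθle : ∀ x, x ∈ Un → Ws x = m →
        θ ≤ min (G x) (Finset.univ.inf (fun u : U => if m < v x u then v x u else ⊤)) := by
      intro x hxU hxm
      have h1 : θ ≤ E x := Finset.inf_le (Finset.mem_univ x)
      have h2 : E x = min (G x) (Finset.univ.inf (fun u : U => if m < v x u then v x u else ⊤)) :=
        if_pos ⟨hxU, hxm⟩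
      rwa [h2] at h1
    have hm'G : ∀ x, x ∈ Un → Ws x = m → m' ≤ G x := fun x hxU hxm =>
      (min_le_left _ _).trans ((hθle x hxU hxm).trans (min_le_left _ _))
    have hm'v : ∀ x, x ∈ Un → Ws x = m → ∀ u, m < v x u → m' ≤ v x u := by
      intro x hxU hxm u hu
      have h0 : (Finset.univ.inf (fun u : U => if m < v x u then v x u else ⊤))
          ≤ if m < v x u then v x u else ⊤ := Finset.inf_le (Finset.mem_univ u)
      rw [if_pos hu] at h0
      exact (min_le_left _ _).trans (((hθle x hxU hxm).trans (min_le_right _ _)).trans h0)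
    set W' : X → EReal := fun z => if z ∈ Un ∧ Ws z = m then m' else Ws z with hW'def
    have hW'pos : ∀ z, z ∈ Un ∧ Ws z = m → W' z = m' := fun z hz => if_pos hz
    have hW'neg : ∀ z, ¬(z ∈ Un ∧ Ws z = m) → W' z = Ws z := fun z hz => if_neg hz
    have hW'ge : ∀ z, Ws z ≤ W' z := by
      intro z
      by_cases hz : z ∈ Un ∧ Ws z = m
      · rw [hW'pos z hz, hz.2]; exact le_of_lt hm'gt
      · rw [hW'neg z hz]
    have hkey : ∀ k z, W' z ≤ Witer F G g k z := by
      intro k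
      induction k with
      | zero =>
        intro z
        by_cases hz : z ∈ Un ∧ Ws z = m
        · rw [hW'pos z hz]; exact hm'G z hz.1 hz.2
        · rw [hW'neg z hz]; exact hWsle 0 z
      | succ k ih =>
        intro z
        by_cases hz : z ∈ Un ∧ Ws z = m
        · rw [hW'pos z hz, Witer_succ]
          refine le_min (hm'G z hz.1 hz.2) (le_iInf fun u => ?_)
          by_cases hu : m < v z u
          · calc m' ≤ v z u := hm'v z hz.1 hz.2 u hu
              _ ≤ ⨆ y ∈ F z u, (g z y u + Witer F G g k y) :=
                  iSup₂_mono fun y _ => add_le_add_right (hWsle k y) _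
          · obtain ⟨y, hy, hyne⟩ := hA z hz.1 hz.2 u (not_lt.1 hu)
            have hyU : y ∈ Un := (hmem y).2 hyne
            have hym : Ws y = m := by
              refine le_antisymm ?_ (hm_le y hyU)
              calc Ws y ≤ g z y u + Ws y := le_add_of_nonneg_left (hg z y u)
                _ ≤ v z u := le_iSup₂ (f := fun y (_ : y ∈ F z u) => g z y u + Ws y) y hy
                _ ≤ m := not_lt.1 hu
            calc m' = W' y := (hW'pos y ⟨hyU, hym⟩).symm
              _ ≤ Witer F G g k y := ih y
              _ ≤ g z y u + Witer F G g k y := le_add_of_nonneg_left (hg z y u)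
              _ ≤ ⨆ y ∈ F z u, (g z y u + Witer F G g k y) :=
                  le_iSup₂ (f := fun y (_ : y ∈ F z u) => g z y u + Witer F G g k y) y hy
        · rw [hW'neg z hz]
          exact hWsle (k+1) z
    have hcontra : W' x₀ ≤ Ws x₀ := le_iInf fun k => hkey k x₀
    rw [hW'pos x₀ ⟨hx₀U, hx₀.symm⟩, ← hx₀] at hcontra
    exact absurd hcontra (not_le.2 hm'gt)

end BF

theorem stmt7 {X U : Type*} [Fintype X] [Fintype U] [Nonempty X] [Nonempty U]
    (F : X → U → Set X) (hF : ∀ x u, (F x u).Nonempty)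
    (G : X → EReal) (hG : ∀ x, G x ≠ ⊥)
    (g : X → X → U → EReal) (hg : ∀ x y u, 0 ≤ g x y u) :
    ∃ N ≤ Fintype.card X,
      (Pop F G g)^[N + 1] G = (Pop F G g)^[N] G ∧
      Pop F G g ((Pop F G g)^[N] G) = (Pop F G g)^[N] G ∧
      ∀ W : X → EReal, Pop F G g W = W → W ≤ (Pop F G g)^[N] G := by
  classical
  set S : ℕ → Finset X :=
    fun k => Finset.univ.filter (fun x => Witer F G g k x = Wstar F G g x) with hSdef
  have hSmem : ∀ k x, x ∈ S k ↔ Witer F G g k x = Wstar F G g x := by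
    intro k x; rw [hSdef]; simp
  have hSmono : ∀ k, S k ⊆ S (k+1) := by
    intro k x hx
    refine (hSmem (k+1) x).2 (le_antisymm ?_ (wstar_le F G g (k+1) x))
    exact (Witer_anti F G g k x).trans_eq ((hSmem k x).1 hx)
  have hgrow' : ∀ k, S k ≠ Finset.univ → (S k).card < (S (k+1)).card := by
    intro k hk
    have hne : ∃ x, Witer F G g k x ≠ Wstar F G g x := by
      by_contra h
      push_neg at h
      exact hk (Finset.eq_univ_iff_forall.2 fun x => (hSmem k x).2 (h x))
    obtain ⟨x, hx1, hx2⟩ := grow F G g hF hG hg k hne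
    refine Finset.card_lt_card ((Finset.ssubset_iff_of_subset (hSmono k)).2
      ⟨x, (hSmem (k+1) x).2 hx2, fun hmem => hx1 ((hSmem k x).1 hmem)⟩)
  have hcard : ∀ k, S k = Finset.univ ∨ k ≤ (S k).card := by
    intro k
    induction k with
    | zero => exact Or.inr (Nat.zero_le _)
    | succ k ih =>
      by_cases hk : S k = Finset.univ
      · exact Or.inl (Finset.univ_subset_iff.1 (hk ▸ hSmono k))
      · rcases ih with h | h
        · exact absurd h hk
        · exact Or.inr (Nat.succ_le_of_lt (lt_of_le_of_lt h (hgrow' k hk)))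
  have hSN : S (Fintype.card X) = Finset.univ := by
    rcases hcard (Fintype.card X) with h | h
    · exact h
    · exact Finset.eq_univ_of_card _ (le_antisymm (Finset.card_le_univ _)
        (by simpa using h))
  have hfix : ∀ x, Witer F G g (Fintype.card X) x = Wstar F G g x :=
    fun x => (hSmem _ x).1 (hSN ▸ Finset.mem_univ x)
  have heq : (Pop F G g)^[Fintype.card X + 1] G = (Pop F G g)^[Fintype.card X] G := by
    funext x
    show Witer F G g (Fintype.card X + 1) x = Witer F G g (Fintype.card X) x
    refine le_antisymm (Witer_anti F G g _ x) ?_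
    rw [hfix x]
    exact wstar_le F G g _ x
  refine ⟨Fintype.card X, le_rfl, heq, ?_, ?_⟩
  · rw [← Function.iterate_succ_apply' (Pop F G g) (Fintype.card X) G]
    exact heq
  · intro W hW
    have hmax : ∀ k, W ≤ (Pop F G g)^[k] G := by
      intro k
      induction k with
      | zero =>
        rw [← hW]
        exact pop_le_G F G g W
      | succ k ih =>
        rw [Function.iterate_succ_apply']
        calc W = Pop F G g W := hW.symm
          _ ≤ Pop F G g ((Pop F G g)^[k] G) := pop_mono F G g ih
    exact hmax (Fintype.card X)
end

section
/- Frontier correctness (key invariant of Algorithm 1): with W_0 = G and W_{n+1} = P(W_n), if W_{n+1}(x) < W_n(x) for some x ∈ X, then n = 0 or there exist u ∈ U and y ∈ F(x,u) with W_n(y) < W_{n-1}(y). Equivalently, a node's value can decrease in iteration n+1 only if one of its successors' values decreased in iteration n. -/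
lemma Pop_mono {X U : Type*} (F : X → U → Set X) (G : X → EReal)
    (g : X → X → U → EReal) (W1 W2 : X → EReal) (x : X)
    (h : ∀ u, ∀ y ∈ F x u, W1 y ≤ W2 y) :
    Pop F G g W1 x ≤ Pop F G g W2 x := by
  unfold Pop
  refine min_le_min le_rfl ?_
  refine iInf_mono fun u => ?_
  refine iSup_mono fun y => ?_
  refine iSup_mono' fun hy => ⟨hy, add_le_add le_rfl (h u y hy)⟩

theorem stmt10 {X U : Type*} [Fintype X] [Fintype U] [Nonempty X] [Nonempty U]
    (F : X → U → Set X) (hF : ∀ x u, (F x u).Nonempty)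
    (G : X → EReal) (g : X → X → U → EReal) (hg : ∀ x y u, 0 ≤ g x y u) :
    ∀ (n : ℕ) (x : X),
      (Pop F G g)^[n + 1] G x < (Pop F G g)^[n] G x →
      n = 0 ∨ ∃ u : U, ∃ y ∈ F x u,
        (Pop F G g)^[n] G y < (Pop F G g)^[n - 1] G y := by
  intro n x hlt
  cases n with
  | zero => exact Or.inl rfl
  | succ k =>
    right
    by_contra hc
    push_neg at hc
    have key : (Pop F G g)^[k + 1] G x ≤ (Pop F G g)^[k + 2] G x := by
      rw [Function.iterate_succ_apply', Function.iterate_succ_apply']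
      exact Pop_mono F G g _ _ x fun u y hy => by
        simpa using hc u y hy
    exact absurd hlt (not_lt.mpr key)
end

section
/- In the value iteration W_0 = G, W_{n+1} = P(W_n) with finite X, U and g ≥ 0, for each n the set {x : W_{n+1}(x) < W_n(x)} is contained in ⋃_{u∈U} pred-image of {x : W_n(x) < W_{n-1}(x)} for n ≥ 1; formally, {x : W_{n+1}(x) < W_n(x)} ⊆ {x : ∃u∈U, ∃y∈F(x,u), W_n(y) < W_{n-1}(y)}. -/
theorem stmt18 {X U : Type*} [Fintype X] [Fintype U] [Nonempty X] [Nonempty U]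
    (F : X → U → Set X) (hF : ∀ x u, (F x u).Nonempty)
    (G : X → EReal) (g : X → X → U → EReal) (hg : ∀ x y u, 0 ≤ g x y u) :
    ∀ n : ℕ, 1 ≤ n →
      {x : X | (Pop F G g)^[n + 1] G x < (Pop F G g)^[n] G x} ⊆
      {x : X | ∃ u : U, ∃ y ∈ F x u,
        (Pop F G g)^[n] G y < (Pop F G g)^[n - 1] G y} := by
  intro n hn x hx
  by_contra h
  apply absurd hx
  simp only [Set.mem_setOf_eq, not_lt]
  simp only [Set.mem_setOf_eq, not_exists, not_and, not_lt] at h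
  obtain ⟨m, rfl⟩ : ∃ m, n = m + 1 := ⟨n - 1, (Nat.succ_pred_eq_of_pos hn).symm⟩
  simp only [Nat.add_sub_cancel] at h
  rw [Function.iterate_succ_apply', Function.iterate_succ_apply' (n := m + 1)]
  show Pop F G g _ x ≤ Pop F G g _ x
  unfold Pop
  refine min_le_min le_rfl (iInf_mono fun u => ?_)
  refine iSup₂_mono fun y hy => ?_
  exact add_le_add le_rfl (h u y hy)
end
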